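/- For an L-smooth function R bounded below by R*, if (α/2)∑_{t=1}^T ‖∇R(w_t)‖² ≤ R(w_1) − R* + (αC₁/2)·E + α²C₂T for constants C₁, C₂, E ≥ 0, and E ≤ nV/γ + γVT + n²α²C₃T/γ², then choosing α = 1/(n^{2/5}T^{3/5}) and γ = n^{2/5}/T^{2/5} (with T > n) yields (1/T)∑_{t=1}^T E‖∇R(w_t)‖² = O(n^{2/5}/T^{2/5}). -/

import Mathlib

set_option maxHeartbeats 1000000


/-- Combination of the descent lemma and the moving-average error bound: if
`(α/2) S ≤ Δ₁ + (α C₁/2) E + α² C₂ T` where `S = ∑_{t=1}^T ‖∇R(w_t)‖²`, and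
`E ≤ n V/γ + γ V T + n² α² C₃ T/γ²`, then choosing `α = 1/(n^{2/5} T^{3/5})` and
`γ = n^{2/5}/T^{2/5}` (with `T > n ≥ 1`) yields
`(1/T) S = O(n^{2/5}/T^{2/5})`, with the constant depending only on
`Δ₁, V, C₁, C₂, C₃`. -/
theorem scraan_convergence_rate (Δ₁ V C₁ C₂ C₃ : ℝ)
    (hΔ : 0 ≤ Δ₁) (hV : 0 ≤ V) (hC₁ : 0 ≤ C₁) (hC₂ : 0 ≤ C₂) (hC₃ : 0 ≤ C₃) :
    ∃ K : ℝ, 0 ≤ K ∧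
      ∀ (n T : ℕ), 1 ≤ n → n < T →
        ∀ S E : ℝ, 0 ≤ S → 0 ≤ E →
          (let α : ℝ := 1 / ((n : ℝ) ^ ((2 : ℝ) / 5) * (T : ℝ) ^ ((3 : ℝ) / 5))
           let γ : ℝ := (n : ℝ) ^ ((2 : ℝ) / 5) / (T : ℝ) ^ ((2 : ℝ) / 5)
           α / 2 * S ≤ Δ₁ + α * C₁ / 2 * E + α ^ 2 * C₂ * T ∧
             E ≤ (n : ℝ) * V / γ + γ * V * T + (n : ℝ) ^ 2 * α ^ 2 * C₃ * T / γ ^ 2) →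
          S / T ≤ K * (n : ℝ) ^ ((2 : ℝ) / 5) / (T : ℝ) ^ ((2 : ℝ) / 5) := by
  refine ⟨2*Δ₁ + 2*C₁*V + C₁*C₃ + 2*C₂, by positivity, ?_⟩
  intro n T hn hnT S E hS hE h
  simp only at h
  obtain ⟨h1, h2⟩ := h
  have hx1 : (1:ℝ) ≤ (n:ℝ) := by exact_mod_cast hn
  have hxy : (n:ℝ) ≤ (T:ℝ) := by exact_mod_cast hnT.le
  have hy1 : (1:ℝ) ≤ (T:ℝ) := le_trans hx1 hxy
  have hx0 : (0:ℝ) < (n:ℝ) := lt_of_lt_of_le one_pos hx1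
  have hy0 : (0:ℝ) < (T:ℝ) := lt_of_lt_of_le one_pos hy1
  set u : ℝ := (n:ℝ) ^ ((1:ℝ)/5) with hu_def
  set v : ℝ := (T:ℝ) ^ ((1:ℝ)/5) with hv_def
  have hu0 : 0 < u := Real.rpow_pos_of_pos hx0 _
  have hv0 : 0 < v := Real.rpow_pos_of_pos hy0 _
  have hu1 : 1 ≤ u := Real.one_le_rpow hx1 (by norm_num)
  have hv1 : 1 ≤ v := Real.one_le_rpow hy1 (by norm_num)
  have huv : u ≤ v := Real.rpow_le_rpow hx0.le hxy (by norm_num)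
  have ex2 : (n:ℝ) ^ ((2:ℝ)/5) = u ^ 2 := by
    rw [hu_def, ← Real.rpow_natCast ((n:ℝ) ^ ((1:ℝ)/5)) 2, ← Real.rpow_mul hx0.le]
    norm_num
  have ey2 : (T:ℝ) ^ ((2:ℝ)/5) = v ^ 2 := by
    rw [hv_def, ← Real.rpow_natCast ((T:ℝ) ^ ((1:ℝ)/5)) 2, ← Real.rpow_mul hy0.le]
    norm_num
  have ey3 : (T:ℝ) ^ ((3:ℝ)/5) = v ^ 3 := by
    rw [hv_def, ← Real.rpow_natCast ((T:ℝ) ^ ((1:ℝ)/5)) 3, ← Real.rpow_mul hy0.le]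
    norm_num
  have ex5 : (n:ℝ) = u ^ 5 := by
    rw [hu_def, ← Real.rpow_natCast ((n:ℝ) ^ ((1:ℝ)/5)) 5, ← Real.rpow_mul hx0.le]
    norm_num
  have ey5 : (T:ℝ) = v ^ 5 := by
    rw [hv_def, ← Real.rpow_natCast ((T:ℝ) ^ ((1:ℝ)/5)) 5, ← Real.rpow_mul hy0.le]
    norm_num
  rw [ex2, ey3] at h1 h2
  rw [ey2, ex5] at h2
  rw [ey5] at h1 h2
  rw [ex2, ey2, ey5]
  -- simplify h2 to polynomial form
  have h2' : E ≤ V*u^3*v^2 + V*u^2*v^3 + C₃*u^2*v^3 := by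
    have heq : (u^5) * V / (u ^ 2 / v ^ 2) + u ^ 2 / v ^ 2 * V * v ^ 5 +
        (u^5) ^ 2 * (1 / (u ^ 2 * v ^ 3)) ^ 2 * C₃ * v ^ 5 / (u ^ 2 / v ^ 2) ^ 2
        = V*u^3*v^2 + V*u^2*v^3 + C₃*u^2*v^3 := by
      field_simp
    linarith [heq ▸ h2]
  have hE3 : E ≤ (2*V + C₃) * (u^2*v^3) := by
    have hmono : u^3*v^2 ≤ u^2*v^3 := by nlinarith [mul_le_mul_of_nonneg_left huv (by positivity : (0:ℝ) ≤ u^2*v^2)]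
    have hexp : (2*V+C₃)*(u^2*v^3) = V*(u^2*v^3) + V*(u^2*v^3) + C₃*(u^2*v^3) := by ring
    linarith [mul_le_mul_of_nonneg_left hmono hV]
  -- simplify h1: multiply by 2 u^2 v^3
  have hS2 : S ≤ 2*Δ₁*(u^2*v^3) + C₁*E + 2*C₂*v^2/u^2 := by
    have hpos : (0:ℝ) < u^2*v^3 := by positivity
    have h1' : 1 / (u ^ 2 * v ^ 3) / 2 * S * (2*(u^2*v^3)) ≤
        (Δ₁ + 1 / (u ^ 2 * v ^ 3) * C₁ / 2 * E + (1 / (u ^ 2 * v ^ 3)) ^ 2 * C₂ * v ^ 5) * (2*(u^2*v^3)) :=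
      mul_le_mul_of_nonneg_right h1 (by positivity)
    have e1 : 1 / (u ^ 2 * v ^ 3) / 2 * S * (2*(u^2*v^3)) = S := by
      field_simp
    have e2 : (Δ₁ + 1 / (u ^ 2 * v ^ 3) * C₁ / 2 * E + (1 / (u ^ 2 * v ^ 3)) ^ 2 * C₂ * v ^ 5) * (2*(u^2*v^3))
        = 2*Δ₁*(u^2*v^3) + C₁*E + 2*C₂*v^2/u^2 := by
      field_simp
    linarith [e1 ▸ e2 ▸ h1']
  have hlast : 2*C₂*v^2/u^2 ≤ 2*C₂*(u^2*v^3) := by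
    rw [div_le_iff₀ (by positivity)]
    have hv23 : v^2 ≤ v^3 := by nlinarith [mul_nonneg (sq_nonneg v) (sub_nonneg.2 hv1)]
    have hu4 : (1:ℝ) ≤ u^4 := by nlinarith [sq_nonneg (u-1), sq_nonneg (u^2-1)]
    nlinarith [mul_le_mul_of_nonneg_left hv23 (by positivity : (0:ℝ) ≤ 2*C₂),
      mul_le_mul_of_nonneg_left hu4 (by positivity : (0:ℝ) ≤ 2*C₂*v^3)]
  have hSfin : S ≤ (2*Δ₁ + 2*C₁*V + C₁*C₃ + 2*C₂) * (u^2*v^3) := by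
    have := mul_le_mul_of_nonneg_left hE3 hC₁
    have hexp2 : (2*Δ₁ + 2*C₁*V + C₁*C₃ + 2*C₂) * (u^2*v^3)
        = 2*Δ₁*(u^2*v^3) + C₁*((2*V+C₃)*(u^2*v^3)) + 2*C₂*(u^2*v^3) := by ring
    linarith
  rw [div_le_div_iff₀ (by positivity) (by positivity)]
  linarith [mul_le_mul_of_nonneg_right hSfin (by positivity : (0:ℝ) ≤ v^2)]
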